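/- Let A be a set, k ≥ 1 an integer, and let d_0, d_1, …, d_k : A³ → A be directed Jónsson operations, that is, satisfying for all elements of A: d_0(x,y,z) = x; d_i(x,y,x) = x for 0 ≤ i ≤ k; d_i(x,z,z) = d_{i+1}(x,x,z) for 0 ≤ i < k; d_k(x,y,z) = z. Let ℓ ≥ 2 be an even integer, let α be a tolerance with respect to d_0, …, d_k, and let S, T be reflexive relations on A compatible with each d_i. Then α ∩ (S ∘_ℓ T) ⊆ (α ∩ S) ∘_{ℓ(k−1)} (α ∩ T). -/

import Mathlib

/-- Relational composition: `a (Comp R S) c` iff there is `b` with `a R b` and `b S c`. -/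
def Comp {A : Type*} (R S : A → A → Prop) : A → A → Prop :=
  fun a c => ∃ b, R a b ∧ S b c

/-- `AltComp R S m` is the alternating composition `R ∘ S ∘ R ∘ ⋯` with exactly `m` factors. -/
def AltComp {A : Type*} : (R S : A → A → Prop) → ℕ → A → A → Prop
  | _, _, 0 => Eq
  | R, _, 1 => R
  | R, S, (n+2) => Comp R (AltComp S R (n+1))

/-- Converse relation. -/
def Conv {A : Type*} (R : A → A → Prop) : A → A → Prop := fun a b => R b a

/-- Intersection of relations. -/
def InterRel {A : Type*} (R S : A → A → Prop) : A → A → Prop := fun a b => R a b ∧ S a b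

/-- `RelPow R n` is `R ∘ R ∘ ⋯ ∘ R` with `n` factors. -/
def RelPow {A : Type*} (R : A → A → Prop) : ℕ → A → A → Prop
  | 0 => Eq
  | 1 => R
  | n+2 => Comp R (RelPow R (n+1))

/-- Compatibility of a relation with a ternary operation. -/
def Compat3 {A : Type*} (f : A → A → A → A) (R : A → A → Prop) : Prop :=
  ∀ a a' b b' c c', R a a' → R b b' → R c c' → R (f a b c) (f a' b' c')

/-- Compatibility of a relation with an `n`-ary operation. -/
def CompatV {A : Type*} {n : ℕ} (f : (Fin n → A) → A) (R : A → A → Prop) : Prop :=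
  ∀ a b : Fin n → A, (∀ i, R (a i) (b i)) → R (f a) (f b)

/-- Composition `S 0 ∘ S 1 ∘ ⋯ ∘ S (n-1)` of a family of `n` relations. -/
def FamComp {A : Type*} : (n : ℕ) → (Fin n → A → A → Prop) → A → A → Prop
  | 0, _ => Eq
  | 1, S => S 0
  | n+2, S => Comp (S 0) (FamComp (n+1) (fun i => S i.succ))

/-- The substitution `x_0, x_0, x_2, x_2, x_4, x_4, …` (arguments identified in
consecutive pairs starting from the first two). -/
def EvenPair {A : Type*} (m : ℕ) (x : Fin (m+2) → A) : Fin (m+2) → A :=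
  fun j => x ⟨2 * (j.val / 2), by have := j.isLt; omega⟩

/-- The substitution `x_0, x_1, x_1, x_3, x_3, …` (arguments identified in
consecutive pairs starting from the second and third). -/
def OddPair {A : Type*} (m : ℕ) (x : Fin (m+2) → A) : Fin (m+2) → A :=
  fun j => x ⟨2 * ((j.val + 1) / 2) - 1, by have := j.isLt; omega⟩

lemma altComp_of_chain {A : Type*} : ∀ (m : ℕ) (R S : A → A → Prop) (g : ℕ → A),
    (∀ t, t < m → if t % 2 = 0 then R (g t) (g (t+1)) else S (g t) (g (t+1))) →
    AltComp R S m (g 0) (g m) := by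
  intro m
  induction m using Nat.strong_induction_on with
  | _ m ih =>
    match m with
    | 0 => intro R S g _; exact rfl
    | 1 =>
      intro R S g h
      have h0 := h 0 (by omega)
      exact (by simpa using h0 : R (g 0) (g 1))
    | n+2 =>
      intro R S g h
      have h0 := h 0 (by omega)
      refine ⟨g 1, by simpa using h0, ?_⟩
      have key := ih (n+1) (by omega) S R (fun t => g (t+1)) ?_
      · simpa using key
      · intro t ht
        have h' := h (t+1) (by omega)
        rcases Nat.even_or_odd t with he | ho
        · have e1 : t % 2 = 0 := Nat.even_iff.mp he
          have e2 : (t+1) % 2 = 1 := by omega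
          simp only [e1, e2] at h' ⊢
          simpa using h'
        · have e1 : t % 2 = 1 := Nat.odd_iff.mp ho
          have e2 : (t+1) % 2 = 0 := by omega
          simp only [e1, e2] at h' ⊢
          simpa using h'

lemma chain_of_altComp {A : Type*} : ∀ (m : ℕ) (R S : A → A → Prop) (a c : A),
    AltComp R S m a c → ∃ g : ℕ → A, g 0 = a ∧ g m = c ∧
      ∀ t, t < m → if t % 2 = 0 then R (g t) (g (t+1)) else S (g t) (g (t+1)) := by
  intro m
  induction m using Nat.strong_induction_on with
  | _ m ih =>
    match m with
    | 0 =>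
      intro R S a c h
      have h' : a = c := h
      exact ⟨fun _ => a, rfl, h'.symm ▸ rfl, fun t ht => absurd ht (by omega)⟩
    | 1 =>
      intro R S a c h
      have h' : R a c := h
      refine ⟨fun t => if t = 0 then a else c, by simp, by simp, ?_⟩
      intro t ht
      have : t = 0 := by omega
      subst this
      simpa using h'
    | n+2 =>
      intro R S a c h
      obtain ⟨e, hae, hrest⟩ := h
      obtain ⟨g', hg0, hgm, hgstep⟩ := ih (n+1) (by omega) S R e c hrest
      refine ⟨fun t => if t = 0 then a else g' (t-1), by simp, by simp [hgm], ?_⟩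
      intro t ht
      rcases Nat.eq_zero_or_pos t with rfl | htpos
      · simpa [hg0] using hae
      · have e0 : ¬ (t = 0) := by omega
        have e1 : ¬ (t + 1 = 0) := by omega
        have hs := hgstep (t-1) (by omega)
        have e2 : t - 1 + 1 = t := by omega
        rw [e2] at hs
        have e3 : t + 1 - 1 = t := by omega
        rcases Nat.even_or_odd t with he | ho
        · have p1 : t % 2 = 0 := Nat.even_iff.mp he
          have p2 : (t-1) % 2 = 1 := by omega
          rw [p2, if_neg one_ne_zero] at hs
          rw [if_pos p1]
          show R (if t = 0 then a else g' (t-1)) (if t+1 = 0 then a else g' (t+1-1))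
          rw [if_neg e0, if_neg e1, e3]
          exact hs
        · have p1 : t % 2 = 1 := Nat.odd_iff.mp ho
          have p2 : (t-1) % 2 = 0 := by omega
          rw [p2, if_pos rfl] at hs
          rw [if_neg (by omega : ¬ t % 2 = 0)]
          show S (if t = 0 then a else g' (t-1)) (if t+1 = 0 then a else g' (t+1-1))
          rw [if_neg e0, if_neg e1, e3]
          exact hs

/-- Extension of the family `d` to all natural indices (constant above `k`). -/
def Dext {A : Type*} (k : ℕ) (d : Fin (k+1) → A → A → A → A) (i : ℕ) : A → A → A → A :=
  d ⟨min i k, Nat.lt_succ_of_le (Nat.min_le_right i k)⟩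

section DextLemmas
variable {A : Type*} {k : ℕ} (d : Fin (k+1) → A → A → A → A)

lemma Dext_zero (hd0 : ∀ x y z, d 0 x y z = x) : ∀ x y z, Dext k d 0 x y z = x := by
  intro x y z
  unfold Dext
  have : (⟨min 0 k, Nat.lt_succ_of_le (Nat.min_le_right 0 k)⟩ : Fin (k+1)) = 0 := by
    apply Fin.ext; simp
  rw [this, hd0]

lemma Dext_mid (hdmid : ∀ (i : Fin (k+1)) x y, d i x y x = x) :
    ∀ (i : ℕ) x y, Dext k d i x y x = x := fun i x y => hdmid _ x y

lemma Dext_last (hdk : ∀ x y z, d (Fin.last k) x y z = z) :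
    ∀ (i : ℕ), k ≤ i → ∀ x y z, Dext k d i x y z = z := by
  intro i hi x y z
  unfold Dext
  have : (⟨min i k, Nat.lt_succ_of_le (Nat.min_le_right i k)⟩ : Fin (k+1)) = Fin.last k := by
    apply Fin.ext; simp [Fin.last]; omega
  rw [this, hdk]

lemma Dext_dir
    (hdir : ∀ (i : ℕ) (hi : i < k) x z, d ⟨i, Nat.lt_succ_of_lt hi⟩ x z z = d ⟨i+1, Nat.succ_lt_succ hi⟩ x x z)
    (hdk : ∀ x y z, d (Fin.last k) x y z = z) :
    ∀ (i : ℕ) x z, Dext k d i x z z = Dext k d (i+1) x x z := by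
  intro i x z
  by_cases h : i < k
  · have e1 : (⟨min i k, Nat.lt_succ_of_le (Nat.min_le_right i k)⟩ : Fin (k+1))
        = ⟨i, by omega⟩ := by apply Fin.ext; simp; omega
    have e2 : (⟨min (i+1) k, Nat.lt_succ_of_le (Nat.min_le_right (i+1) k)⟩ : Fin (k+1))
        = ⟨i+1, by omega⟩ := by apply Fin.ext; simp; omega
    unfold Dext
    rw [e1, e2]
    exact hdir i h x z
  · rw [Dext_last d hdk i (by omega), Dext_last d hdk (i+1) (by omega)]

lemma Dext_compat {R : A → A → Prop} (hc : ∀ i, Compat3 (d i) R) :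
    ∀ (i : ℕ), Compat3 (Dext k d i) R := fun i => hc _

end DextLemmas

theorem stmt11 {A : Type*}
    (k : ℕ) (hk : 1 ≤ k) (d : Fin (k+1) → A → A → A → A)
    (hd0 : ∀ x y z, d 0 x y z = x)
    (hdmid : ∀ (i : Fin (k+1)) x y, d i x y x = x)
    (hdir : ∀ (i : ℕ) (hi : i < k) x z, d ⟨i, by omega⟩ x z z = d ⟨i+1, by omega⟩ x x z)
    (hdk : ∀ x y z, d (Fin.last k) x y z = z)
    (ℓ : ℕ) (hℓ : 2 ≤ ℓ) (hℓeven : Even ℓ)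
    (α : A → A → Prop)
    (hαrefl : ∀ a, α a a) (hαsymm : ∀ a b, α a b → α b a)
    (hαcompat : ∀ i, Compat3 (d i) α)
    (S T : A → A → Prop)
    (hSrefl : ∀ a, S a a) (hScompat : ∀ i, Compat3 (d i) S)
    (hTrefl : ∀ a, T a a) (hTcompat : ∀ i, Compat3 (d i) T) :
    ∀ a c, InterRel α (AltComp S T ℓ) a c →
      AltComp (InterRel α S) (InterRel α T) (ℓ * (k - 1)) a c := by
  intro a c hac'
  obtain ⟨hac, hST⟩ := hac'
  obtain ⟨b, hb0, hbl, hbstep⟩ := chain_of_altComp ℓ S T a c hST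
  have hℓpos : 0 < ℓ := by omega
  have hDmid := Dext_mid d hdmid
  have hDdir := Dext_dir d hdir hdk
  have hDlast := Dext_last d hdk
  have hD0 := Dext_zero d hd0
  have hDα := Dext_compat d hαcompat
  have hDS := Dext_compat d hScompat
  have hDT := Dext_compat d hTcompat
  -- every element of the construction is α-related to a and to c
  have hαa : ∀ (i : ℕ) (y : A), α a (Dext k d i a y c) := by
    intro i y
    have := hDα i a a y y a c (hαrefl a) (hαrefl y) hac
    rwa [hDmid i a y] at this
  have hαc : ∀ (i : ℕ) (y : A), α c (Dext k d i a y c) := by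
    intro i y
    have := hDα i c a y y c c (hαsymm _ _ hac) (hαrefl y) (hαrefl c)
    rwa [hDmid i c y] at this
  -- the chain
  set g : ℕ → A := fun t => Dext k d (t / ℓ + 1) a (b (t % ℓ)) c with hgdef
  have hg0 : g 0 = a := by
    show Dext k d (0 / ℓ + 1) a (b (0 % ℓ)) c = a
    rw [Nat.zero_div, Nat.zero_mod, hb0, ← hDdir 0 a c, hD0]
  have hgm : g (ℓ * (k - 1)) = c := by
    show Dext k d (ℓ * (k-1) / ℓ + 1) a (b (ℓ * (k-1) % ℓ)) c = c
    rw [Nat.mul_div_cancel_left _ hℓpos, Nat.mul_mod_right, hb0]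
    exact hDlast (k - 1 + 1) (by omega) a a c
  have hstep : ∀ t, t < ℓ * (k - 1) →
      if t % 2 = 0 then InterRel α S (g t) (g (t+1)) else InterRel α T (g t) (g (t+1)) := by
    intro t ht
    have hdm := Nat.div_add_mod t ℓ
    have hjℓ : t % ℓ < ℓ := Nat.mod_lt _ hℓpos
    have key : g (t + 1) = Dext k d (t / ℓ + 1) a (b (t % ℓ + 1)) c := by
      by_cases hj : t % ℓ + 1 < ℓ
      · have ht1 : t + 1 = (t % ℓ + 1) + ℓ * (t / ℓ) := by omega
        have h1 : (t+1) / ℓ = t / ℓ := by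
          rw [ht1, Nat.add_mul_div_left _ _ hℓpos, Nat.div_eq_of_lt hj, Nat.zero_add]
        have h2 : (t+1) % ℓ = t % ℓ + 1 := by
          rw [ht1, Nat.add_mul_mod_self_left, Nat.mod_eq_of_lt hj]
        show Dext k d ((t+1) / ℓ + 1) a (b ((t+1) % ℓ)) c = _
        rw [h1, h2]
      · have hj' : t % ℓ + 1 = ℓ := by omega
        have hms : ℓ * (t / ℓ + 1) = ℓ * (t / ℓ) + ℓ := Nat.mul_succ ℓ _
        have ht1 : t + 1 = ℓ * (t / ℓ + 1) := by omega
        have h1 : (t+1) / ℓ = t / ℓ + 1 := by rw [ht1, Nat.mul_div_cancel_left _ hℓpos]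
        have h2 : (t+1) % ℓ = 0 := by rw [ht1, Nat.mul_mod_right]
        show Dext k d ((t+1) / ℓ + 1) a (b ((t+1) % ℓ)) c = _
        rw [h1, h2, hb0, ← hDdir (t / ℓ + 1) a c, hj', hbl]
    have hgt : g t = Dext k d (t / ℓ + 1) a (b (t % ℓ)) c := rfl
    -- α between consecutive elements
    have hα1 : α (g t) (g (t+1)) := by
      rw [key]
      have := hDα (t / ℓ + 1) (g t) a (b (t % ℓ + 1)) (b (t % ℓ + 1)) (g t) c
        (hαsymm _ _ (by rw [hgt]; exact hαa _ _)) (hαrefl _)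
        (hαsymm _ _ (by rw [hgt]; exact hαc _ _))
      rwa [hDmid] at this
    -- parity transfer
    obtain ⟨w, hw⟩ := hℓeven.mul_right (t / ℓ)
    have hpar : t % 2 = (t % ℓ) % 2 := by omega
    have hbs := hbstep (t % ℓ) hjℓ
    by_cases hp : t % 2 = 0
    · rw [if_pos hp]
      rw [if_pos (by omega : t % ℓ % 2 = 0)] at hbs
      refine ⟨hα1, ?_⟩
      rw [hgt, key]
      exact hDS _ _ _ _ _ _ _ (hSrefl a) hbs (hSrefl c)
    · rw [if_neg hp]
      rw [if_neg (by omega : ¬ t % ℓ % 2 = 0)] at hbs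
      refine ⟨hα1, ?_⟩
      rw [hgt, key]
      exact hDT _ _ _ _ _ _ _ (hTrefl a) hbs (hTrefl c)
  have := altComp_of_chain (ℓ * (k - 1)) (InterRel α S) (InterRel α T) g hstep
  rwa [hg0, hgm] at this
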